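/- For fixed c > 0, let q(P̄) > 0 solve c · E_1(c/q) = P̄. Then as P̄ → ∞, c/q(P̄) → 0 and ln q(P̄) = P̄/c + ln c + γ + o(1), i.e., q(P̄) · e^{−P̄/c} → c · e^{γ} where γ is the Euler–Mascheroni constant. -/

import Mathlib

open MeasureTheory Real Filter

/-- The exponential integral `E₁(x) = ∫_x^∞ e^{-t}/t dt`. -/
noncomputable def E1 (x : ℝ) : ℝ := ∫ t in Set.Ioi x, Real.exp (-t) / t

open Set Topology

lemma E1_def (x : ℝ) : E1 x = ∫ t in Set.Ioi x, Real.exp (-t) / t := rfl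

lemma integral_log_mul_exp_neg :
    ∫ t in Ioi (0:ℝ), Real.log t * Real.exp (-t) = -Real.eulerMascheroniConstant := by
  have h1 := Complex.hasDerivAt_GammaIntegral (s := 1) (by simp)
  set I : ℂ := ∫ t : ℝ in Ioi (0:ℝ), (t:ℂ) ^ ((1:ℂ) - 1) * (Real.log t * Real.exp (-t)) with hI
  have h2 : I = ((∫ t in Ioi (0:ℝ), Real.log t * Real.exp (-t) : ℝ) : ℂ) := by
    rw [hI]
    have e : (∫ t : ℝ in Ioi (0:ℝ), (t:ℂ) ^ ((1:ℂ) - 1) * (Real.log t * Real.exp (-t)))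
        = ∫ t : ℝ in Ioi (0:ℝ), ((Real.log t * Real.exp (-t) : ℝ) : ℂ) := by
      apply setIntegral_congr_fun measurableSet_Ioi
      intro t ht
      simp [Complex.cpow_zero]
    rw [e]
    exact integral_ofReal
  have h3 : HasDerivAt Complex.Gamma I 1 := by
    apply h1.congr_of_eventuallyEq
    have : {s : ℂ | 0 < s.re} ∈ nhds (1:ℂ) :=
      (isOpen_lt continuous_const Complex.continuous_re).mem_nhds (by simp)
    filter_upwards [this] with s hs
    exact Complex.Gamma_eq_integral hs
  have h4 : HasDerivAt Real.Gamma I.re 1 := by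
    have h := h3.real_of_complex
    have e : (fun x : ℝ => (Complex.Gamma x).re) = Real.Gamma := by
      ext x; rw [Complex.Gamma_ofReal, Complex.ofReal_re]
    rwa [e] at h
  have h5 := h4.unique Real.hasDerivAt_Gamma_one
  rw [h2] at h5
  simpa using h5

lemma E1_integrableOn {a : ℝ} (ha : 0 < a) :
    IntegrableOn (fun t => Real.exp (-t) / t) (Ioi a) := by
  have hg : IntegrableOn (fun t => Real.exp (-t) / a) (Ioi a) := by
    have := exp_neg_integrableOn_Ioi a (b := 1) one_pos
    have h2 : IntegrableOn (fun t => Real.exp (-1 * t) / a) (Ioi a) := this.div_const a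
    simpa using h2
  refine Integrable.mono' hg ?_ ?_
  · refine ContinuousOn.aestronglyMeasurable ?_ measurableSet_Ioi
    exact ContinuousOn.div (by fun_prop) continuousOn_id
      (fun t ht => ne_of_gt (ha.trans ht))
  · filter_upwards [ae_restrict_mem measurableSet_Ioi] with t ht
    have h0 : 0 < t := ha.trans ht
    rw [Real.norm_eq_abs, abs_of_nonneg (by positivity)]
    gcongr
    exact le_of_lt ht

lemma E1_anti {a b : ℝ} (ha : 0 < a) (hab : a ≤ b) : E1 b ≤ E1 a := by
  apply setIntegral_mono_set (E1_integrableOn ha)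
  · filter_upwards [ae_restrict_mem measurableSet_Ioi] with t ht
    have h0 : 0 < t := ha.trans ht
    positivity
  · exact HasSubset.Subset.eventuallyLE (Ioi_subset_Ioi hab)

lemma one_sub_exp_bounds {t : ℝ} (ht : 0 < t) :
    0 ≤ (1 - Real.exp (-t)) / t ∧ (1 - Real.exp (-t)) / t ≤ 1 := by
  have h1 : Real.exp (-t) ≤ 1 := Real.exp_le_one_iff.2 (by linarith)
  have h2 : 1 - t ≤ Real.exp (-t) := by
    have := Real.add_one_le_exp (-t); linarith
  constructor
  · apply div_nonneg (by linarith) ht.le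
  · rw [div_le_one ht]; linarith

lemma integrableOn_oneSub :
    IntegrableOn (fun t => (1 - Real.exp (-t)) / t) (Ioc (0:ℝ) 1) := by
  refine Integrable.mono' (g := fun _ => (1:ℝ))
    (integrableOn_const measure_Ioc_lt_top.ne) ?_ ?_
  · refine ContinuousOn.aestronglyMeasurable ?_ measurableSet_Ioc
    exact ContinuousOn.div (by fun_prop) continuousOn_id
      (fun t ht => ne_of_gt ht.1)
  · filter_upwards [ae_restrict_mem measurableSet_Ioc] with t ht
    obtain ⟨h0, h1⟩ := one_sub_exp_bounds ht.1
    rw [Real.norm_eq_abs, abs_of_nonneg h0]; exact h1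

lemma neg_log_le {t : ℝ} (ht : 0 < t) : -Real.log t ≤ 2 * t ^ (-(1/2) : ℝ) := by
  have hs : 0 < t ^ ((1/2) : ℝ) := Real.rpow_pos_of_pos ht _
  have h1 : Real.log ((t ^ ((1/2):ℝ))⁻¹) ≤ (t ^ ((1/2):ℝ))⁻¹ - 1 :=
    Real.log_le_sub_one_of_pos (by positivity)
  rw [Real.log_inv] at h1
  have h2 : Real.log (t ^ ((1/2):ℝ)) = (1/2) * Real.log t := Real.log_rpow ht _
  have h3 : t ^ (-(1/2) : ℝ) = (t ^ ((1/2):ℝ))⁻¹ := Real.rpow_neg ht.le _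
  rw [h3]
  nlinarith [h1, h2]

lemma integrableOn_logexp_Ioc :
    IntegrableOn (fun t => Real.log t * Real.exp (-t)) (Ioc (0:ℝ) 1) := by
  have hg : IntegrableOn (fun t => 2 * t ^ (-(1/2) : ℝ)) (Ioc (0:ℝ) 1) := by
    have := (intervalIntegral.intervalIntegrable_rpow' (a := 0) (b := 1)
      (r := -(1/2)) (by norm_num)).const_mul 2
    rwa [intervalIntegrable_iff_integrableOn_Ioc_of_le zero_le_one] at this
  refine Integrable.mono' hg ?_ ?_
  · refine ContinuousOn.aestronglyMeasurable ?_ measurableSet_Ioc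
    exact ContinuousOn.mul (fun t ht => (Real.continuousAt_log (ne_of_gt ht.1)).continuousWithinAt)
      (by fun_prop)
  · filter_upwards [ae_restrict_mem measurableSet_Ioc] with t ht
    have h0 : 0 < t := ht.1
    have hlog : Real.log t ≤ 0 := Real.log_nonpos h0.le ht.2
    rw [Real.norm_eq_abs, abs_mul, abs_of_nonneg (Real.exp_pos _).le,
      abs_of_nonpos hlog]
    calc -Real.log t * Real.exp (-t) ≤ -Real.log t * 1 := by
          apply mul_le_mul_of_nonneg_left _ (by linarith)
          exact Real.exp_le_one_iff.2 (by linarith)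
      _ = -Real.log t := mul_one _
      _ ≤ 2 * t ^ (-(1/2) : ℝ) := neg_log_le h0

lemma integrableOn_logexp_Ioi :
    IntegrableOn (fun t => Real.log t * Real.exp (-t)) (Ioi (1:ℝ)) := by
  have hg : IntegrableOn (fun t => Real.exp (-t) * t ^ ((2:ℝ) - 1)) (Ioi (1:ℝ)) :=
    (Real.GammaIntegral_convergent (by norm_num : (0:ℝ) < 2)).mono_set
      (Ioi_subset_Ioi zero_le_one)
  refine Integrable.mono' hg ?_ ?_
  · refine ContinuousOn.aestronglyMeasurable ?_ measurableSet_Ioi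
    exact ContinuousOn.mul
      (fun t ht => (Real.continuousAt_log (ne_of_gt (lt_trans zero_lt_one ht))).continuousWithinAt)
      (by fun_prop)
  · filter_upwards [ae_restrict_mem measurableSet_Ioi] with t ht
    have h1 : (1:ℝ) < t := ht
    have hlog : 0 ≤ Real.log t := Real.log_nonneg h1.le
    have hlt : Real.log t ≤ t := by
      have := Real.log_le_sub_one_of_pos (by linarith : (0:ℝ) < t); linarith
    rw [Real.norm_eq_abs, abs_mul, abs_of_nonneg hlog, abs_of_nonneg (Real.exp_pos _).le]
    have : t ^ ((2:ℝ) - 1) = t := by norm_num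
    rw [this, mul_comm (Real.exp (-t)) t]
    exact mul_le_mul_of_nonneg_right hlt (Real.exp_pos _).le

lemma hasDerivAt_one_sub_exp (x : ℝ) :
    HasDerivAt (fun t => 1 - Real.exp (-t)) (Real.exp (-x)) x := by
  have h := ((Real.hasDerivAt_exp (-x)).comp x (hasDerivAt_neg x)).const_sub 1
  simpa using h

lemma partB : ∫ t in Ioc (0:ℝ) 1, Real.log t * Real.exp (-t)
    = - ∫ t in Ioc (0:ℝ) 1, (1 - Real.exp (-t)) / t := by
  set f : ℝ → ℝ := fun t => Real.log t * (1 - Real.exp (-t)) with hf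
  set f' : ℝ → ℝ := fun t => (1 - Real.exp (-t)) / t + Real.log t * Real.exp (-t) with hf'
  have hcont : ContinuousOn f (Icc 0 1) := by
    intro t ht
    rcases eq_or_lt_of_le ht.1 with h0 | h0
    · rw [← h0]
      rw [← continuousWithinAt_diff_self]
      have hsub : Icc (0:ℝ) 1 \ {0} ⊆ Ioi 0 := by
        intro s hs
        exact lt_of_le_of_ne hs.1.1 (Ne.symm hs.2)
      have hf0 : f 0 = 0 := by simp [hf]
      rw [ContinuousWithinAt, hf0]
      apply Tendsto.mono_left _ (nhdsWithin_mono 0 hsub)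
      apply squeeze_zero_norm' (a := fun t => |Real.log t * t ^ (1:ℝ)|)
      · filter_upwards [self_mem_nhdsWithin] with s (hs : 0 < s)
        have h1 : Real.exp (-s) ≤ 1 := Real.exp_le_one_iff.2 (by linarith)
        have h2 : 1 - s ≤ Real.exp (-s) := by
          have := Real.add_one_le_exp (-s); linarith
        rw [hf, Real.norm_eq_abs, abs_mul, abs_mul, Real.rpow_one]
        apply mul_le_mul_of_nonneg_left _ (abs_nonneg _)
        rw [abs_of_nonneg (by linarith : 0 ≤ 1 - Real.exp (-s)),
          abs_of_nonneg hs.le]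
        linarith
      · simpa using (tendsto_log_mul_rpow_nhdsGT_zero one_pos).abs
    · apply ContinuousAt.continuousWithinAt
      exact (Real.continuousAt_log (ne_of_gt h0)).mul (by fun_prop)
  have hderiv : ∀ x ∈ Ioo (0:ℝ) 1, HasDerivWithinAt f (f' x) (Ioi x) x := by
    intro x hx
    apply HasDerivAt.hasDerivWithinAt
    have h := (Real.hasDerivAt_log (ne_of_gt hx.1)).mul (hasDerivAt_one_sub_exp x)
    have h' : HasDerivAt f (x⁻¹ * (1 - Real.exp (-x)) + Real.log x * Real.exp (-x)) x := h
    refine h'.congr_deriv ?_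
    rw [hf']
    field_simp
  have hint : IntervalIntegrable f' volume 0 1 := by
    rw [intervalIntegrable_iff_integrableOn_Ioc_of_le zero_le_one]
    exact integrableOn_oneSub.add integrableOn_logexp_Ioc
  have := intervalIntegral.integral_eq_sub_of_hasDeriv_right_of_le zero_le_one hcont hderiv hint
  have hval : f 1 - f 0 = 0 := by simp [hf]
  rw [hval, intervalIntegral.integral_of_le zero_le_one] at this
  have hadd : ∫ t in Ioc (0:ℝ) 1, f' t
      = (∫ t in Ioc (0:ℝ) 1, (1 - Real.exp (-t)) / t)
        + ∫ t in Ioc (0:ℝ) 1, Real.log t * Real.exp (-t) :=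
    integral_add integrableOn_oneSub integrableOn_logexp_Ioc
  rw [hadd] at this
  linarith

lemma partC : ∫ t in Ioi (1:ℝ), Real.log t * Real.exp (-t) = E1 1 := by
  have h := integral_Ioi_mul_deriv_eq_deriv_mul (a := 1)
    (u := fun t => Real.log t) (u' := fun t => t⁻¹)
    (v := fun t => -Real.exp (-t)) (v' := fun t => Real.exp (-t))
    (a' := 0) (b' := 0)
    (fun x hx => Real.hasDerivAt_log (ne_of_gt (lt_trans zero_lt_one hx)))
    (fun x hx => by exact ((hasDerivAt_neg x).exp).neg.congr_deriv (by simp))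
    (by exact integrableOn_logexp_Ioi)
    ?_ ?_ ?_
  · rw [E1_def]
    rw [h]
    have : ∫ t in Ioi (1:ℝ), (fun t => t⁻¹) t * (fun t => -Real.exp (-t)) t
        = - ∫ t in Ioi (1:ℝ), Real.exp (-t) / t := by
      rw [← integral_neg]
      apply setIntegral_congr_fun measurableSet_Ioi
      intro t ht
      simp only
      ring
    rw [this]
    ring
  · have : (fun x => (fun t => t⁻¹) x * (fun t => -Real.exp (-t)) x)
        = fun x => -(Real.exp (-x) / x) := by
      funext x; simp only; ring
    rw [Pi.mul_def, this]
    exact (E1_integrableOn one_pos).neg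
  · have hc : ContinuousAt (fun x => Real.log x * -Real.exp (-x)) 1 :=
      (Real.continuousAt_log one_ne_zero).mul (by fun_prop)
    have h2 := hc.tendsto.mono_left (nhdsWithin_le_nhds (s := Ioi (1:ℝ)))
    have e : ((fun t => Real.log t) * fun t => -Real.exp (-t))
        = fun x => Real.log x * -Real.exp (-x) := rfl
    rw [e]
    simpa using h2
  · apply squeeze_zero_norm' (a := fun x => x ^ 1 * Real.exp (-x))
    · filter_upwards [eventually_ge_atTop (1:ℝ)] with x hx
      have h0 : (0:ℝ) < x := lt_of_lt_of_le zero_lt_one hx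
      have hlog : 0 ≤ Real.log x := Real.log_nonneg hx
      have hlt : Real.log x ≤ x := by
        have := Real.log_le_sub_one_of_pos h0; linarith
      rw [Pi.mul_apply, Real.norm_eq_abs, abs_mul, abs_of_nonneg hlog, abs_neg,
        abs_of_nonneg (Real.exp_pos _).le, pow_one]
      exact mul_le_mul_of_nonneg_right hlt (Real.exp_pos _).le
    · exact tendsto_pow_mul_exp_neg_atTop_nhds_zero 1

lemma key : E1 1 - (∫ t in Ioc (0:ℝ) 1, (1 - Real.exp (-t)) / t)
    = -Real.eulerMascheroniConstant := by
  have hsplit : ∫ t in Ioi (0:ℝ), Real.log t * Real.exp (-t)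
      = (∫ t in Ioc (0:ℝ) 1, Real.log t * Real.exp (-t))
        + ∫ t in Ioi (1:ℝ), Real.log t * Real.exp (-t) := by
    rw [← Ioc_union_Ioi_eq_Ioi (zero_le_one)]
    exact setIntegral_union (Ioc_disjoint_Ioi le_rfl) measurableSet_Ioi
      integrableOn_logexp_Ioc integrableOn_logexp_Ioi
  have := integral_log_mul_exp_neg
  rw [hsplit, partB, partC] at this
  linarith

lemma E1_split {x : ℝ} (hx : 0 < x) (hx1 : x ≤ 1) :
    E1 x = (∫ t in Ioc x 1, Real.exp (-t) / t) + E1 1 := by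
  rw [E1_def, E1_def, ← Ioc_union_Ioi_eq_Ioi hx1]
  exact setIntegral_union (Ioc_disjoint_Ioi le_rfl) measurableSet_Ioi
    ((E1_integrableOn hx).mono_set Ioc_subset_Ioi_self) (E1_integrableOn one_pos)

lemma E1_add_log : Tendsto (fun x => E1 x + Real.log x) (𝓝[>] (0:ℝ))
    (𝓝 (-Real.eulerMascheroniConstant)) := by
  set C := ∫ t in Ioc (0:ℝ) 1, (1 - Real.exp (-t)) / t with hC
  have hform : ∀ x : ℝ, x ∈ Ioc (0:ℝ) 1 →
      E1 x + Real.log x = E1 1 - ∫ t in Ioc x 1, (1 - Real.exp (-t)) / t := by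
    intro x hx
    have hint1 : IntegrableOn (fun t => 1 / t) (Ioc x 1) := by
      apply (ContinuousOn.integrableOn_Icc ?_).mono_set Ioc_subset_Icc_self
      exact ContinuousOn.div continuousOn_const continuousOn_id
        (fun t ht => ne_of_gt (lt_of_lt_of_le hx.1 ht.1))
    have hint2 : IntegrableOn (fun t => (1 - Real.exp (-t)) / t) (Ioc x 1) :=
      integrableOn_oneSub.mono_set (Ioc_subset_Ioc_left hx.1.le)
    have h2 : ∫ t in Ioc x 1, Real.exp (-t) / t
        = (∫ t in Ioc x 1, 1 / t) - ∫ t in Ioc x 1, (1 - Real.exp (-t)) / t := by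
      rw [← integral_sub hint1 hint2]
      apply setIntegral_congr_fun measurableSet_Ioc
      intro t ht
      have : t ≠ 0 := ne_of_gt (lt_trans hx.1 ht.1)
      field_simp
      ring
    have h3 : ∫ t in Ioc x 1, 1 / t = -Real.log x := by
      rw [← intervalIntegral.integral_of_le hx.2,
        integral_one_div (by
          intro h
          rcases (mem_uIcc.mp h) with h' | h' <;> simp_all <;> linarith [hx.1])]
      rw [one_div, Real.log_inv]
    rw [E1_split hx.1 hx.2, h2, h3]
    ring
  have hconv : Tendsto (fun x => ∫ t in Ioc x 1, (1 - Real.exp (-t)) / t)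
      (𝓝[>] (0:ℝ)) (𝓝 C) := by
    rw [show 𝓝 C = 𝓝 (C - 0) by rw [sub_zero]]
    have h0 : Tendsto (fun x : ℝ => ∫ t in Ioc (0:ℝ) x, (1 - Real.exp (-t)) / t)
        (𝓝[>] (0:ℝ)) (𝓝 0) := by
      apply squeeze_zero_norm' (a := fun x => x)
      · filter_upwards [Ioc_mem_nhdsGT_of_mem (Set.left_mem_Ico.2 zero_lt_one)]
          with x hx
        have hb : ‖∫ t in Ioc (0:ℝ) x, (1 - Real.exp (-t)) / t‖
            ≤ 1 * (volume (Ioc (0:ℝ) x)).toReal := by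
          apply norm_setIntegral_le_of_norm_le_const
            (measure_Ioc_lt_top (μ := volume) (a := (0:ℝ)) (b := x))
          · intro t ht
            obtain ⟨hn, hl⟩ := one_sub_exp_bounds ht.1
            rw [Real.norm_eq_abs, abs_of_nonneg hn]
            exact hl
        calc ‖∫ t in Ioc (0:ℝ) x, (1 - Real.exp (-t)) / t‖ ≤
            1 * (volume (Ioc (0:ℝ) x)).toReal := hb
          _ = x := by
            rw [one_mul, Real.volume_Ioc]
            simp [hx.1.le]
      · exact tendsto_id.mono_left nhdsWithin_le_nhds |>.congr (fun x => rfl) |>.mono_left le_rfl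
    have heq : ∀ᶠ x in 𝓝[>] (0:ℝ), ∫ t in Ioc x 1, (1 - Real.exp (-t)) / t
        = C - ∫ t in Ioc (0:ℝ) x, (1 - Real.exp (-t)) / t := by
      filter_upwards [Ioc_mem_nhdsGT_of_mem (Set.left_mem_Ico.2 zero_lt_one)]
        with x hx
      have hsplit : C = (∫ t in Ioc (0:ℝ) x, (1 - Real.exp (-t)) / t)
          + ∫ t in Ioc x 1, (1 - Real.exp (-t)) / t := by
        rw [hC, ← Ioc_union_Ioc_eq_Ioc hx.1.le hx.2]
        exact setIntegral_union (Ioc_disjoint_Ioc_of_le le_rfl) measurableSet_Ioc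
          (integrableOn_oneSub.mono_set (Ioc_subset_Ioc_right hx.2))
          (integrableOn_oneSub.mono_set (Ioc_subset_Ioc_left hx.1.le))
      linarith
    exact Tendsto.congr' (heq.mono fun x hx => hx.symm) (tendsto_const_nhds.sub h0)
  have : Tendsto (fun x => E1 1 - ∫ t in Ioc x 1, (1 - Real.exp (-t)) / t)
      (𝓝[>] (0:ℝ)) (𝓝 (E1 1 - C)) := tendsto_const_nhds.sub hconv
  rw [show E1 1 - C = -Real.eulerMascheroniConstant from key] at this
  apply this.congr'
  filter_upwards [Ioc_mem_nhdsGT_of_mem (Set.left_mem_Ico.2 zero_lt_one)] with x hx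
  exact (hform x hx).symm

/-- If `q(P̄) > 0` solves `c·E₁(c/q) = P̄`, then as `P̄ → ∞` we have
`c/q(P̄) → 0` and `q(P̄)·e^{−P̄/c} → c·e^{γ}`, i.e.
`ln q(P̄) = P̄/c + ln c + γ + o(1)`. -/
theorem stmt13 (c : ℝ) (hc : 0 < c) (q : ℝ → ℝ)
    (hq : ∀ Pbar : ℝ, 0 < Pbar → 0 < q Pbar ∧ c * E1 (c / q Pbar) = Pbar) :
    Tendsto (fun Pbar : ℝ => c / q Pbar) atTop (nhds 0) ∧
    Tendsto (fun Pbar : ℝ => q Pbar * Real.exp (-(Pbar / c))) atTop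
      (nhds (c * Real.exp Real.eulerMascheroniConstant)) := by
  have h0 : Tendsto (fun P : ℝ => c / q P) atTop (𝓝 0) := by
    rw [NormedAddCommGroup.tendsto_nhds_zero]
    intro ε hε
    filter_upwards [eventually_gt_atTop (max 0 (c * E1 ε))] with P hP
    have hP0 : 0 < P := lt_of_le_of_lt (le_max_left _ _) hP
    obtain ⟨hq1, hq2⟩ := hq P hP0
    have hcq : 0 < c / q P := div_pos hc hq1
    rw [Real.norm_eq_abs, abs_of_pos hcq]
    by_contra hcon
    push_neg at hcon
    have h1 : E1 (c / q P) ≤ E1 ε := E1_anti hε hcon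
    have h2 : P ≤ c * E1 ε := by
      rw [← hq2]
      exact mul_le_mul_of_nonneg_left h1 hc.le
    exact absurd (lt_of_le_of_lt (le_max_right 0 (c * E1 ε)) hP) (not_lt.2 h2)
  have h0' : Tendsto (fun P : ℝ => c / q P) atTop (𝓝[>] 0) := by
    apply tendsto_nhdsWithin_of_tendsto_nhds_of_eventually_within _ h0
    filter_upwards [eventually_gt_atTop (0:ℝ)] with P hP
    exact div_pos hc (hq P hP).1
  refine ⟨h0, ?_⟩
  have h2 : Tendsto (fun P : ℝ => E1 (c / q P) + Real.log (c / q P)) atTop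
      (𝓝 (-Real.eulerMascheroniConstant)) := E1_add_log.comp h0'
  have h3 : Tendsto (fun P : ℝ => c * Real.exp (-(E1 (c / q P) + Real.log (c / q P))))
      atTop (𝓝 (c * Real.exp Real.eulerMascheroniConstant)) := by
    have hcomp : Tendsto (fun P : ℝ => Real.exp (-(E1 (c / q P) + Real.log (c / q P))))
        atTop (𝓝 (Real.exp (-(-Real.eulerMascheroniConstant)))) :=
      (Real.continuous_exp.tendsto _).comp h2.neg
    rw [neg_neg] at hcomp
    exact Tendsto.const_mul c hcomp
  apply h3.congr'
  filter_upwards [eventually_gt_atTop (0:ℝ)] with P hP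
  obtain ⟨hq1, hq2⟩ := hq P hP
  have hx : 0 < c / q P := div_pos hc hq1
  have hE : E1 (c / q P) = P / c := by
    rw [eq_div_iff hc.ne', mul_comm, hq2]
  rw [hE, neg_add, Real.exp_add, Real.exp_neg (Real.log (c / q P)), Real.exp_log hx]
  rw [show (c / q P)⁻¹ = q P / c by rw [inv_div]]
  field_simp
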